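/- Let E_tr : ℝ^N → Sym(3×3) be a twice continuously differentiable map and let C be a symmetric positive definite fourth-order tensor on symmetric 3×3 matrices. If the function (E, χ) ↦ ½ C(E − E_tr(χ)) : (E − E_tr(χ)) is convex on Sym(3×3) × ℝ^N, then E_tr is affine. -/
import Mathlib

open Matrix

theorem stmt0 (N : ℕ)
    (Etr : (Fin N → ℝ) → Matrix (Fin 3) (Fin 3) ℝ)
    (C : Matrix (Fin 3) (Fin 3) ℝ →ₗ[ℝ] Matrix (Fin 3) (Fin 3) ℝ)
    (hEtr : ContDiff ℝ 2 (fun χ (i j : Fin 3) => Etr χ i j))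
    (hEtrSym : ∀ χ, (Etr χ)ᵀ = Etr χ)
    (hCsym : ∀ A B : Matrix (Fin 3) (Fin 3) ℝ, ((C A)ᵀ * B).trace = (Aᵀ * C B).trace)
    (hCpos : ∀ A : Matrix (Fin 3) (Fin 3) ℝ, Aᵀ = A → A ≠ 0 → 0 < ((C A)ᵀ * A).trace)
    (hconv : ConvexOn ℝ {p : Matrix (Fin 3) (Fin 3) ℝ × (Fin N → ℝ) | p.1ᵀ = p.1}
      (fun p => (1 / 2) * ((C (p.1 - Etr p.2))ᵀ * (p.1 - Etr p.2)).trace)) :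
    ∃ (L : (Fin N → ℝ) →ₗ[ℝ] Matrix (Fin 3) (Fin 3) ℝ) (c : Matrix (Fin 3) (Fin 3) ℝ),
      ∀ χ, Etr χ = L χ + c := by
  classical
  -- Step 1: midpoint property of Etr
  have hmid : ∀ χ₀ χ₁ : Fin N → ℝ,
      Etr ((1/2 : ℝ) • χ₀ + (1/2 : ℝ) • χ₁)
        = (1/2 : ℝ) • Etr χ₀ + (1/2 : ℝ) • Etr χ₁ := by
    intro χ₀ χ₁
    set m : Fin N → ℝ := (1/2 : ℝ) • χ₀ + (1/2 : ℝ) • χ₁ with hm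
    set A : Matrix (Fin 3) (Fin 3) ℝ :=
      (1/2 : ℝ) • Etr χ₀ + (1/2 : ℝ) • Etr χ₁ - Etr m with hA
    have hAsym : Aᵀ = A := by
      simp [hA, transpose_add, transpose_smul, transpose_sub, hEtrSym]
    have hA0 : A = 0 := by
      by_contra hne
      have hpos := hCpos A hAsym hne
      have key := hconv.2 (x := (Etr χ₀, χ₀)) (y := (Etr χ₁, χ₁))
        (hEtrSym χ₀) (hEtrSym χ₁)
        (by norm_num : (0:ℝ) ≤ 1/2) (by norm_num : (0:ℝ) ≤ 1/2) (by norm_num)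
      have hpt : (1/2 : ℝ) • ((Etr χ₀, χ₀) : Matrix (Fin 3) (Fin 3) ℝ × (Fin N → ℝ))
          + (1/2 : ℝ) • (Etr χ₁, χ₁)
          = (((1/2 : ℝ) • Etr χ₀ + (1/2 : ℝ) • Etr χ₁), m) := by
        simp [Prod.ext_iff, hm]
      rw [hpt] at key
      simp only [sub_self, map_zero, transpose_zero, zero_mul, Matrix.trace_zero,
        mul_zero, add_zero] at key
      have hle : (1/2 : ℝ) * ((C A)ᵀ * A).trace ≤ 0 := by
        simpa [hA] using key
      nlinarith
    rw [hA, sub_eq_zero] at hA0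
    exact hA0.symm
  -- half in ℝ
  have h2 : (⅟2 : ℝ) = 1/2 := by
    norm_num [invOf_eq_inv]
  -- Step 2: build the linear map
  set g : (Fin N → ℝ) → Matrix (Fin 3) (Fin 3) ℝ := fun χ => Etr χ - Etr 0 with hg
  have hg0 : g 0 = 0 := sub_self _
  have hgm : ∀ x y, g (midpoint ℝ x y) = midpoint ℝ (g x) (g y) := by
    intro x y
    rw [midpoint_eq_smul_add, midpoint_eq_smul_add, h2, smul_add, smul_add]
    simp only [hg]
    rw [hmid x y]
    module
  have hcont : Continuous Etr := hEtr.continuous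
  have hgc : Continuous g := hcont.sub continuous_const
  set L0 := (AddMonoidHom.ofMapMidpoint ℝ ℝ g hg0 hgm).toRealLinearMap hgc with hL0
  refine ⟨L0.toLinearMap, Etr 0, fun χ => ?_⟩
  have : L0 χ = g χ := rfl
  simp [this, hg]
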